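/- arXiv:2106.11078 — 2 statements merged into one kernel-verified Lean document; each statement's English description precedes it below -/
import Mathlib

section
/- Let 𝔤 be a Lie algebra over a field k equipped with a symmetric invariant bilinear form B (i.e. B([x,y],z) + B(y,[x,z]) = 0) on 𝔤, transferred via B to an element of S²(𝔤) viewed as a map B♯ : 𝔤* → 𝔤. Then B♯ : 𝔤* → 𝔤, where 𝔤* carries the bracket [α,β] := ad*_{B♯α} β and 𝔤 acts on 𝔤* by the negative coadjoint action x·α = −ad*_x α, is a crossed module of Lie algebras. -/
/-- Let 𝔤 be a finite-dimensional Lie algebra with an invariant symmetric bilinear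
form, transferred to a map B♯ : 𝔤* → 𝔤 (so that ⟨β, B♯α⟩ is symmetric in α, β and
invariant). Then B♯ : 𝔤* → 𝔤, with the bracket [α,β] = ad*_{B♯α} β on 𝔤* and the
(negative) coadjoint action x·α = −ad*_x α of 𝔤 on 𝔤*, is a crossed module of Lie
algebras: the bracket on 𝔤* is a Lie bracket, B♯ is a morphism of brackets, the
action is a Lie algebra action by derivations, and the crossed module axioms
B♯(x·α) = [x, B♯α] and (B♯α)·β = [α,β] hold. -/
theorem stmt_7 {k 𝔤 : Type*} [Field k] [LieRing 𝔤] [LieAlgebra k 𝔤]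
    [FiniteDimensional k 𝔤]
    (Bs : Module.Dual k 𝔤 →ₗ[k] 𝔤)
    -- symmetry of the bilinear form transferred to B♯
    (hsym : ∀ α β : Module.Dual k 𝔤, β (Bs α) = α (Bs β))
    -- ad-invariance transferred to B♯
    (hinv : ∀ (x : 𝔤) (α β : Module.Dual k 𝔤), α ⁅x, Bs β⁆ + β ⁅x, Bs α⁆ = 0)
    -- the coadjoint action of 𝔤 on 𝔤*: (x·α)(y) = −α([x,y])
    (act : 𝔤 →ₗ[k] Module.Dual k 𝔤 →ₗ[k] Module.Dual k 𝔤)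
    (hact : ∀ (x : 𝔤) (α : Module.Dual k 𝔤) (y : 𝔤), act x α y = -α ⁅x, y⁆)
    -- the bracket on 𝔤*: [α,β] = ad*_{B♯α} β, i.e. [α,β](y) = −β([B♯α, y])
    (br : Module.Dual k 𝔤 →ₗ[k] Module.Dual k 𝔤 →ₗ[k] Module.Dual k 𝔤)
    (hbr : ∀ (α β : Module.Dual k 𝔤) (y : 𝔤), br α β y = -β ⁅Bs α, y⁆) :
    -- the bracket on 𝔤* is antisymmetric
    (∀ α β : Module.Dual k 𝔤, br α β = -br β α) ∧
    -- the bracket on 𝔤* satisfies the Jacobi (Leibniz) identity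
    (∀ α β γ : Module.Dual k 𝔤, br α (br β γ) = br (br α β) γ + br β (br α γ)) ∧
    -- B♯ is a morphism of Lie algebras
    (∀ α β : Module.Dual k 𝔤, Bs (br α β) = ⁅Bs α, Bs β⁆) ∧
    -- the action is a Lie algebra action
    (∀ (x y : 𝔤) (α : Module.Dual k 𝔤),
      act ⁅x, y⁆ α = act x (act y α) - act y (act x α)) ∧
    -- the action is by derivations of the bracket on 𝔤*
    (∀ (x : 𝔤) (α β : Module.Dual k 𝔤),
      act x (br α β) = br (act x α) β + br α (act x β)) ∧
    -- equivariance: B♯(x·α) = [x, B♯α]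
    (∀ (x : 𝔤) (α : Module.Dual k 𝔤), Bs (act x α) = ⁅x, Bs α⁆) ∧
    -- Peiffer identity: (B♯α)·β = [α,β]
    (∀ α β : Module.Dual k 𝔤, act (Bs α) β = br α β) := by
  -- dual vectors separate points
  have sep : ∀ v w : 𝔤, (∀ φ : Module.Dual k 𝔤, φ v = φ w) → v = w := by
    intro v w h
    rw [← sub_eq_zero, ← Module.forall_dual_apply_eq_zero_iff k (v - w)]
    intro φ
    simp [h φ]
  -- key consequence of invariance: α ⁅x, Bs β⁆ = -β ⁅x, Bs α⁆
  have hinv' : ∀ (x : 𝔤) (α β : Module.Dual k 𝔤), α ⁅x, Bs β⁆ = -β ⁅x, Bs α⁆ := by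
    intro x α β
    linear_combination hinv x α β
  -- equivariance
  have hequiv : ∀ (x : 𝔤) (α : Module.Dual k 𝔤), Bs (act x α) = ⁅x, Bs α⁆ := by
    intro x α
    apply sep
    intro φ
    calc φ (Bs (act x α)) = (act x α) (Bs φ) := hsym _ _
      _ = -α ⁅x, Bs φ⁆ := hact _ _ _
      _ = φ ⁅x, Bs α⁆ := by linear_combination -hinv' x α φ
  -- morphism of Lie algebras
  have hmor : ∀ α β : Module.Dual k 𝔤, Bs (br α β) = ⁅Bs α, Bs β⁆ := by
    intro α β
    apply sep
    intro φ
    calc φ (Bs (br α β)) = (br α β) (Bs φ) := hsym _ _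
      _ = -β ⁅Bs α, Bs φ⁆ := hbr _ _ _
      _ = φ ⁅Bs α, Bs β⁆ := by rw [hinv' (Bs α) β φ]; ring
  refine ⟨?_, ?_, hmor, ?_, ?_, hequiv, ?_⟩
  · -- antisymmetry
    intro α β
    ext y
    have h := hinv' y α β
    simp only [hbr, LinearMap.neg_apply]
    rw [← lie_skew y (Bs β), ← lie_skew y (Bs α)] at h
    simp only [map_neg] at h
    linear_combination h
  · -- Jacobi
    intro α β γ
    ext y
    simp only [LinearMap.add_apply, hbr, hmor, map_neg]
    have : ⁅Bs α, ⁅Bs β, y⁆⁆ = ⁅⁅Bs α, Bs β⁆, y⁆ + ⁅Bs β, ⁅Bs α, y⁆⁆ := leibniz_lie _ _ _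
    rw [show ⁅⁅Bs α, Bs β⁆, y⁆ = ⁅Bs α, ⁅Bs β, y⁆⁆ - ⁅Bs β, ⁅Bs α, y⁆⁆ by rw [this]; abel,
      map_sub]
    ring
  · -- action is a Lie algebra action
    intro x y α
    ext z
    simp only [LinearMap.sub_apply, hact, map_neg, neg_neg]
    have : ⁅x, ⁅y, z⁆⁆ = ⁅⁅x, y⁆, z⁆ + ⁅y, ⁅x, z⁆⁆ := leibniz_lie _ _ _
    rw [show ⁅⁅x,y⁆,z⁆ = ⁅x,⁅y,z⁆⁆ - ⁅y,⁅x,z⁆⁆ by rw [this]; abel, map_sub]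
    ring
  · -- derivation property
    intro x α β
    ext y
    simp only [LinearMap.add_apply, hact, hbr, hequiv, map_neg, neg_neg]
    have : ⁅Bs α, ⁅x, y⁆⁆ = ⁅⁅Bs α, x⁆, y⁆ + ⁅x, ⁅Bs α, y⁆⁆ := leibniz_lie _ _ _
    rw [show ⁅Bs α, ⁅x,y⁆⁆ = ⁅⁅Bs α, x⁆, y⁆ + ⁅x, ⁅Bs α, y⁆⁆ from this, map_add,
      ← lie_skew x (Bs α), neg_lie, map_neg]
    ring
  · -- Peiffer
    intro α β
    ext y
    rw [hact, hbr]
end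

section
/- Let 𝔤 be a quadratic Lie algebra with invariant nondegenerate symmetric bilinear form B, and 𝔠 ⊆ 𝔤 a coisotropic Lie subalgebra (i.e. 𝔠^⊥ ⊆ 𝔠, where 𝔠^⊥ is the B-orthogonal of 𝔠). Then 𝔠̃ = {(u,v) ∈ 𝔠 × 𝔠 : u − v ∈ 𝔠^⊥} is a Lagrangian Lie subalgebra of the double 𝔡 = 𝔤 ⊕ 𝔤 equipped with the form B ⊖ B. -/
/-- The subspace 𝔠̃ = {(u,v) ∈ 𝔠 × 𝔠 : u − v ∈ 𝔠^⊥} associated to a coisotropic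
subalgebra 𝔠 of a quadratic Lie algebra (𝔤, B). -/
def ctilde {k 𝔤 : Type*} [Field k] [LieRing 𝔤] [LieAlgebra k 𝔤]
    (B : 𝔤 →ₗ[k] 𝔤 →ₗ[k] k) (𝔠 : LieSubalgebra k 𝔤) : Set (𝔤 × 𝔤) :=
  {p | p.1 ∈ 𝔠 ∧ p.2 ∈ 𝔠 ∧ ∀ c ∈ 𝔠, B (p.1 - p.2) c = 0}

/-- Let 𝔤 be a finite-dimensional quadratic Lie algebra with invariant nondegenerate
symmetric form B and 𝔠 ⊆ 𝔤 a coisotropic Lie subalgebra (𝔠^⊥ ⊆ 𝔠). Then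
𝔠̃ = {(u,v) ∈ 𝔠 × 𝔠 : u − v ∈ 𝔠^⊥} is a Lagrangian Lie subalgebra of the double
𝔡 = 𝔤 ⊕ 𝔤 with the form B ⊖ B: it is closed under the componentwise bracket and
equals its own (B ⊖ B)-orthogonal. -/
theorem stmt_10 {k 𝔤 : Type*} [Field k] [LieRing 𝔤] [LieAlgebra k 𝔤]
    [FiniteDimensional k 𝔤]
    (B : 𝔤 →ₗ[k] 𝔤 →ₗ[k] k)
    (hBsym : ∀ x y : 𝔤, B x y = B y x)
    (hBinv : ∀ x y z : 𝔤, B ⁅x, y⁆ z + B y ⁅x, z⁆ = 0)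
    (hBnd : ∀ x : 𝔤, (∀ y : 𝔤, B x y = 0) → x = 0)
    (𝔠 : LieSubalgebra k 𝔤)
    -- 𝔠 is coisotropic: 𝔠^⊥ ⊆ 𝔠
    (hco : ∀ x : 𝔤, (∀ c ∈ 𝔠, B x c = 0) → x ∈ 𝔠) :
    -- 𝔠̃ is a Lie subalgebra of 𝔤 ⊕ 𝔤
    (∀ p q : 𝔤 × 𝔤, p ∈ ctilde B 𝔠 → q ∈ ctilde B 𝔠 →
      ((⁅p.1, q.1⁆, ⁅p.2, q.2⁆) : 𝔤 × 𝔤) ∈ ctilde B 𝔠) ∧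
    -- 𝔠̃ is Lagrangian with respect to B ⊖ B
    (ctilde B 𝔠 = {v : 𝔤 × 𝔤 | ∀ l ∈ ctilde B 𝔠, B v.1 l.1 - B v.2 l.2 = 0}) := by
  -- 𝔠⊥ is an ideal of 𝔠
  have hperp_ideal : ∀ c ∈ 𝔠, ∀ a : 𝔤, (∀ d ∈ 𝔠, B a d = 0) → ∀ d ∈ 𝔠, B ⁅c, a⁆ d = 0 := by
    intro c hc a ha d hd
    have h1 := hBinv c a d
    have h2 : B a ⁅c, d⁆ = 0 := ha _ (𝔠.lie_mem hc hd)
    linear_combination h1 - h2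
  have part1 : ∀ p q : 𝔤 × 𝔤, p ∈ ctilde B 𝔠 → q ∈ ctilde B 𝔠 →
      ((⁅p.1, q.1⁆, ⁅p.2, q.2⁆) : 𝔤 × 𝔤) ∈ ctilde B 𝔠 := by
    rintro ⟨u₁, u₂⟩ ⟨v₁, v₂⟩ ⟨hu1, hu2, hu⟩ ⟨hv1, hv2, hv⟩
    refine ⟨𝔠.lie_mem hu1 hv1, 𝔠.lie_mem hu2 hv2, ?_⟩
    intro d hd
    have key : ⁅u₁, v₁⁆ - ⁅u₂, v₂⁆ = ⁅u₁ - u₂, v₁⁆ + ⁅u₂, v₁ - v₂⁆ := by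
      simp only [sub_lie, lie_sub]; abel
    have e1' : B ⁅v₁, u₁ - u₂⁆ d = 0 := hperp_ideal v₁ hv1 _ hu d hd
    have e1 : B ⁅u₁ - u₂, v₁⁆ d = 0 := by
      rw [← lie_skew, map_neg, LinearMap.neg_apply, e1', neg_zero]
    have e2 : B ⁅u₂, v₁ - v₂⁆ d = 0 := hperp_ideal u₂ hu2 _ hv d hd
    rw [key]
    simp only [map_add, LinearMap.add_apply, e1, e2, add_zero]
  refine ⟨part1, Set.Subset.antisymm ?_ ?_⟩
  · rintro ⟨u, v⟩ ⟨hu, hv, huv⟩ ⟨a, b⟩ ⟨ha, hb, hab⟩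
    have e1 : B (u - v) a = 0 := huv a ha
    have e2 : B (a - b) v = 0 := hab v hv
    have e2' : B v (a - b) = 0 := by rw [hBsym]; exact e2
    simp only [map_sub, LinearMap.sub_apply] at e1 e2'
    show B u a - B v b = 0
    linear_combination e1 + e2'
  · rintro ⟨x, y⟩ hxy
    simp only [Set.mem_setOf_eq] at hxy
    -- x - y ∈ 𝔠⊥
    have hsub : ∀ c ∈ 𝔠, B (x - y) c = 0 := by
      intro c hc
      have hcc : ((c, c) : 𝔤 × 𝔤) ∈ ctilde B 𝔠 := ⟨hc, hc, by simp⟩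
      have := hxy (c, c) hcc
      simp only [map_sub, LinearMap.sub_apply]
      simpa using this
    -- x ∈ (𝔠⊥)⊥
    have hxperp : ∀ a : 𝔤, (∀ c ∈ 𝔠, B a c = 0) → B x a = 0 := by
      intro a ha
      have haC : a ∈ 𝔠 := hco a ha
      have ha0 : ((a, 0) : 𝔤 × 𝔤) ∈ ctilde B 𝔠 := ⟨haC, 𝔠.zero_mem, by simpa using ha⟩
      have := hxy (a, 0) ha0
      simpa using this
    -- (𝔠⊥)⊥ = 𝔠 by nondegeneracy and finite-dimensionality
    have hrefl : B.IsRefl := fun x y h => by rw [hBsym]; exact h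
    have hnd : LinearMap.BilinForm.Nondegenerate B := hrefl.nondegenerate_iff_separatingLeft.mpr (fun x hx => hBnd x hx)
    have hdd := LinearMap.BilinForm.orthogonal_orthogonal hnd hrefl 𝔠.toSubmodule
    have hx𝔠 : x ∈ 𝔠 := by
      have : x ∈ LinearMap.BilinForm.orthogonal B
          (LinearMap.BilinForm.orthogonal B 𝔠.toSubmodule) := by
        intro n hn
        have hn' : ∀ c ∈ 𝔠, B n c = 0 := by
          intro c hc
          have := hn c hc
          rw [hBsym]; exact this
        have := hxperp n hn'
        show B n x = 0
        rw [hBsym]; exact this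
      rw [hdd] at this
      exact this
    have hy𝔠 : y ∈ 𝔠 := by
      have hxyC : x - y ∈ 𝔠 := hco _ hsub
      have : x - (x - y) ∈ 𝔠 := 𝔠.sub_mem hx𝔠 hxyC
      simpa using this
    exact ⟨hx𝔠, hy𝔠, hsub⟩
end
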